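/- Fix k ≥ 1 and let n = 2^k. For t ∈ Fin n and w ∈ Fin k, let β_w(t) ∈ {∞, 0} be the Boolean encoding of the w-th binary digit of t (namely β_w(t) = 0 if that digit is 1, and ∞ if it is 0), and let β̄_w(t) be its complement. Then for every matrix x : Fin n × Fin n → ℝ ∪ {∞}: the minimum over all permutations σ of Fin n of Σᵢ x_{i,σ(i)} equals the minimum over all Boolean matrices Y : Fin n × Fin k → {∞, 0} of the quantity [ Σ_{u < v} min_{w ∈ Fin k} min( Ȳ_{u,w} + Y_{v,w}, Y_{u,w} + Ȳ_{v,w} ) ] + [ Σᵢ min_{t ∈ Fin n} ( x_{i,t} + Σ_{w ∈ Fin k} min( β_w(t) + Y_{i,w}, β̄_w(t) + Ȳ_{i,w} ) ) ], where all sums, minima and additions are taken in ℝ ∪ {∞} with the convention ∞ + a = ∞. (This is the hypercube-sum expression of the min-plus permanent used to place the permanent family in VNP over min-plus semirings.) -/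

import Mathlib

open MvPolynomial

/-- `𝖱`: the min-plus semiring on `ℝ ∪ {∞}`: tropical addition `+` is `min`
(additive identity `0 = ∞`) and tropical multiplication `*` is ordinary real
addition (multiplicative identity `1` = the real `0`). -/
abbrev TR : Type := Tropical (WithTop ℝ)

/-- The Boolean values of the min-plus semiring, indexed by `Bool`:
`true ↦ 0` (tropical `1`) and `false ↦ ∞` (tropical `0`).
The complement of `bv S b` is `bv S (!b)`. -/
def bv (S : Type) [Zero S] [One S] (b : Bool) : S := if b then 1 else 0


lemma bv_match (a b : Bool) :
    bv TR a * bv TR b + bv TR (!a) * bv TR (!b) = if a = b then 1 else 0 := by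
  cases a <;> cases b <;> simp [bv]

lemma bv_diff (a b : Bool) :
    bv TR (!a) * bv TR b + bv TR a * bv TR (!b) = if a = b then 0 else 1 := by
  cases a <;> cases b <;> simp [bv]

lemma trop_sum_ite {α : Type*} [DecidableEq α] (s : Finset α) (p : α → Prop)
    [DecidablePred p] :
    (∑ a ∈ s, if p a then (0 : TR) else 1) = if ∀ a ∈ s, p a then 0 else 1 := by
  induction s using Finset.induction with
  | empty => simp
  | insert _ _ h ih =>
    rw [Finset.sum_insert h, ih]
    rename_i a s
    by_cases hp : p a
    · by_cases hall : ∀ b ∈ s, p b <;> simp [hp, hall]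
    · have hnot : ¬ ∀ b ∈ insert a s, p b := fun hall' => hp (hall' a (Finset.mem_insert_self a s))
      by_cases hall : ∀ b ∈ s, p b
      · rw [if_neg hp, if_pos hall, if_neg hnot, add_zero]
      · rw [if_neg hp, if_neg hall, if_neg hnot, Tropical.add_self]

noncomputable def bitsEquiv (k : ℕ) : Fin (2 ^ k) ≃ (Fin k → Bool) := by
  refine Equiv.ofBijective (fun t w => (t : ℕ).testBit w)
    ((Fintype.bijective_iff_injective_and_card _).mpr ⟨?_, by simp⟩)
  intro t s h
  apply Fin.ext
  apply Nat.eq_of_testBit_eq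
  intro i
  by_cases hi : i < k
  · exact congrFun h ⟨i, hi⟩
  · push_neg at hi
    rw [Nat.testBit_lt_two_pow, Nat.testBit_lt_two_pow]
    · exact lt_of_lt_of_le s.2 (Nat.pow_le_pow_right (by norm_num) hi)
    · exact lt_of_lt_of_le t.2 (Nat.pow_le_pow_right (by norm_num) hi)

/-- for `k ≥ 1` and `n = 2^k`, with `β_w(t) = bv (Nat.testBit t w)`
the Boolean encoding of the `w`-th binary digit of `t`, and for every
`x : Fin n × Fin n → ℝ ∪ {∞}`, the min-plus permanent
`min_σ Σᵢ x_{i,σ(i)}` equals the minimum over all Boolean matrices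
`Y : Fin n × Fin k → {∞,0}` of
`[Σ_{u<v} min_w min(Ȳ_{u,w}+Y_{v,w}, Y_{u,w}+Ȳ_{v,w})] +
 [Σᵢ min_t (x_{i,t} + Σ_w min(β_w(t)+Y_{i,w}, β̄_w(t)+Ȳ_{i,w}))]`.
(In the tropical semiring: `∑` is min, `∏` is real addition.) -/
theorem stmt2 (k : ℕ) (hk : 1 ≤ k) (x : Fin (2 ^ k) × Fin (2 ^ k) → TR) :
    (∑ σ : Equiv.Perm (Fin (2 ^ k)), ∏ i : Fin (2 ^ k), x (i, σ i))
    = ∑ Y : Fin (2 ^ k) × Fin k → Bool,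
        (∏ p ∈ Finset.univ.filter (fun p : Fin (2 ^ k) × Fin (2 ^ k) => p.1 < p.2),
          ∑ w : Fin k,
            (bv TR (!(Y (p.1, w))) * bv TR (Y (p.2, w))
              + bv TR (Y (p.1, w)) * bv TR (!(Y (p.2, w)))))
        * ∏ i : Fin (2 ^ k),
            ∑ t : Fin (2 ^ k),
              x (i, t) *
                ∏ w : Fin k,
                  (bv TR (Nat.testBit (t : ℕ) (w : ℕ)) * bv TR (Y (i, w))
                    + bv TR (!(Nat.testBit (t : ℕ) (w : ℕ))) * bv TR (!(Y (i, w)))) := by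
  classical
  set e := bitsEquiv k with he
  have heq : ∀ (t : Fin (2 ^ k)) (w : Fin k), e t w = (t : ℕ).testBit w := fun _ _ => rfl
  set Φ : (Fin (2 ^ k) → Fin (2 ^ k)) ≃ (Fin (2 ^ k) × Fin k → Bool) :=
    (Equiv.arrowCongr (Equiv.refl (Fin (2 ^ k))) e).trans
      (Equiv.curry (Fin (2 ^ k)) (Fin k) Bool).symm with hΦ
  have hY : ∀ (g : Fin (2 ^ k) → Fin (2 ^ k)) (i : Fin (2 ^ k)) (w : Fin k),
      Φ g (i, w) = e (g i) w := fun _ _ _ => rfl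
  have hreindex :
      (∑ Y : Fin (2 ^ k) × Fin k → Bool,
        (∏ p ∈ Finset.univ.filter (fun p : Fin (2 ^ k) × Fin (2 ^ k) => p.1 < p.2),
          ∑ w : Fin k,
            (bv TR (!(Y (p.1, w))) * bv TR (Y (p.2, w))
              + bv TR (Y (p.1, w)) * bv TR (!(Y (p.2, w)))))
        * ∏ i : Fin (2 ^ k),
            ∑ t : Fin (2 ^ k),
              x (i, t) *
                ∏ w : Fin k,
                  (bv TR (Nat.testBit (t : ℕ) (w : ℕ)) * bv TR (Y (i, w))
                    + bv TR (!(Nat.testBit (t : ℕ) (w : ℕ))) * bv TR (!(Y (i, w)))))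
      = ∑ g : Fin (2 ^ k) → Fin (2 ^ k),
          (if Function.Injective g then (1 : TR) else 0) * ∏ i, x (i, g i) := by
    refine (Fintype.sum_equiv Φ _ _ ?_).symm
    intro g
    have hfac1 :
        (∏ p ∈ Finset.univ.filter (fun p : Fin (2 ^ k) × Fin (2 ^ k) => p.1 < p.2),
          ∑ w : Fin k,
            (bv TR (!(Φ g (p.1, w))) * bv TR (Φ g (p.2, w))
              + bv TR (Φ g (p.1, w)) * bv TR (!(Φ g (p.2, w)))))
        = if Function.Injective g then (1 : TR) else 0 := by
      have hterm : ∀ (u v : Fin (2 ^ k)),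
          (∑ w : Fin k,
            (bv TR (!(Φ g (u, w))) * bv TR (Φ g (v, w))
              + bv TR (Φ g (u, w)) * bv TR (!(Φ g (v, w)))))
          = if g u = g v then (0 : TR) else 1 := by
        intro u v
        have h1 : ∀ w : Fin k,
            (bv TR (!(Φ g (u, w))) * bv TR (Φ g (v, w))
              + bv TR (Φ g (u, w)) * bv TR (!(Φ g (v, w))))
            = if e (g u) w = e (g v) w then (0 : TR) else 1 := fun w => bv_diff _ _
        rw [Finset.sum_congr rfl (fun w _ => h1 w), trop_sum_ite]
        congr 1
        simp only [eq_iff_iff]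
        constructor
        · intro h
          exact e.injective (funext fun w => h w (Finset.mem_univ w))
        · rintro h w _; rw [h]
      rw [Finset.prod_congr rfl (fun p _ => hterm p.1 p.2)]
      have h2 : ∀ p : Fin (2 ^ k) × Fin (2 ^ k),
          (if g p.1 = g p.2 then (0 : TR) else 1)
            = if ¬(g p.1 = g p.2) then (1 : TR) else 0 := by
        intro p; by_cases h : g p.1 = g p.2 <;> simp [h]
      rw [Finset.prod_congr rfl (fun p _ => h2 p), Finset.prod_boole]
      congr 1
      simp only [eq_iff_iff]
      constructor
      · intro h u v huv
        by_contra hne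
        rcases lt_or_gt_of_ne hne with h1 | h1
        · exact h (u, v) (by simp [h1]) huv
        · exact h (v, u) (by simp [h1]) huv.symm
      · intro h p hp hgg
        exact (ne_of_lt (Finset.mem_filter.mp hp).2) (h hgg)
    have hfac2 :
        (∏ i : Fin (2 ^ k),
          ∑ t : Fin (2 ^ k),
            x (i, t) *
              ∏ w : Fin k,
                (bv TR (Nat.testBit (t : ℕ) (w : ℕ)) * bv TR (Φ g (i, w))
                  + bv TR (!(Nat.testBit (t : ℕ) (w : ℕ))) * bv TR (!(Φ g (i, w)))))
        = ∏ i, x (i, g i) := by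
      refine Finset.prod_congr rfl fun i _ => ?_
      have hmatch : ∀ t : Fin (2 ^ k),
          (∏ w : Fin k,
            (bv TR (Nat.testBit (t : ℕ) (w : ℕ)) * bv TR (Φ g (i, w))
              + bv TR (!(Nat.testBit (t : ℕ) (w : ℕ))) * bv TR (!(Φ g (i, w)))))
          = if t = g i then (1 : TR) else 0 := by
        intro t
        have h1 : ∀ w : Fin k,
            (bv TR (Nat.testBit (t : ℕ) (w : ℕ)) * bv TR (Φ g (i, w))
              + bv TR (!(Nat.testBit (t : ℕ) (w : ℕ))) * bv TR (!(Φ g (i, w))))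
            = if (t : ℕ).testBit w = e (g i) w then (1 : TR) else 0 := fun w =>
          bv_match _ _
        rw [Finset.prod_congr rfl (fun w _ => h1 w), Finset.prod_boole]
        congr 1
        simp only [eq_iff_iff]
        constructor
        · intro h
          exact e.injective (funext fun w => (heq t w).trans (h w (Finset.mem_univ w)))
        · rintro rfl w _
          exact (heq (g i) w).symm
      calc (∑ t : Fin (2 ^ k),
              x (i, t) *
                ∏ w : Fin k,
                  (bv TR (Nat.testBit (t : ℕ) (w : ℕ)) * bv TR (Φ g (i, w))
                    + bv TR (!(Nat.testBit (t : ℕ) (w : ℕ))) * bv TR (!(Φ g (i, w)))))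
          = ∑ t : Fin (2 ^ k), if t = g i then x (i, t) else 0 := by
            refine Finset.sum_congr rfl fun t _ => ?_
            rw [hmatch t, mul_ite, mul_one, mul_zero]
        _ = x (i, g i) := by rw [Finset.sum_ite_eq']; simp
    rw [hfac1, hfac2]
  rw [hreindex]
  have hsplit : ∀ g : Fin (2 ^ k) → Fin (2 ^ k),
      (if Function.Injective g then (1 : TR) else 0) * ∏ i, x (i, g i)
      = if Function.Injective g then ∏ i, x (i, g i) else 0 := by
    intro g; by_cases h : Function.Injective g <;> simp [h]
  rw [Finset.sum_congr rfl (fun g _ => hsplit g), ← Finset.sum_filter]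
  refine Finset.sum_bij' (fun σ _ => ⇑σ)
    (fun g hg => Equiv.ofBijective g
      (Finite.injective_iff_bijective.mp (Finset.mem_filter.mp hg).2))
    ?_ ?_ ?_ ?_ ?_
  · intro σ _
    exact Finset.mem_filter.mpr ⟨Finset.mem_univ _, σ.injective⟩
  · intro g hg; exact Finset.mem_univ _
  · intro σ _; exact Equiv.ext fun _ => rfl
  · intro g hg; rfl
  · intro σ _; rfl
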